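/- Let G = (V,E) be a finite simple graph and define g(S) = (1/|V|) Σ_{y∈S} 1/N̂_S(y) for nonempty S ⊆ V, where N̂_S(y) = |{y' ∈ S : y' = y or (y',y) ∉ E}|. If there exists a nonempty S ⊆ V with g(S) ≥ k/|V| for an integer k ≥ 1, then G contains a clique of size at least k. -/

import Mathlib

open Finset

/-- `Nhat G S y` is the number of vertices of `S` that are not adjacent to `y`
(counting `y` itself). -/
def Nhat {V : Type*} [DecidableEq V] (G : SimpleGraph V) [DecidableRel G.Adj]
    (S : Finset V) (y : V) : ℕ :=
  (S.filter fun y' => y' = y ∨ ¬ G.Adj y' y).card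

/-- `g G S = (1/|V|) Σ_{y ∈ S} 1 / N̂_S(y)`. -/
noncomputable def g {V : Type*} [Fintype V] [DecidableEq V] (G : SimpleGraph V)
    [DecidableRel G.Adj] (S : Finset V) : ℝ :=
  (1 / (Fintype.card V : ℝ)) * ∑ y ∈ S, 1 / (Nhat G S y : ℝ)

lemma aux_frac (n m : ℕ) (h2 : 2 ≤ n) (hnm : n ≤ m) :
    1 / ((m:ℝ) * ((m:ℝ) - 1)) ≤ 1 / ((n:ℝ) - 1) - 1 / (n:ℝ) := by
  have hn1 : (1:ℝ) ≤ (n:ℝ) - 1 := by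
    have : (2:ℝ) ≤ n := by exact_mod_cast h2
    linarith
  have hn0 : (0:ℝ) < n := by linarith
  have hnm' : (n:ℝ) ≤ m := by exact_mod_cast hnm
  have heq : 1 / ((n:ℝ) - 1) - 1 / (n:ℝ) = 1 / ((n:ℝ) * ((n:ℝ) - 1)) := by
    field_simp
    ring
  rw [heq]
  apply one_div_le_one_div_of_le
  · nlinarith
  · nlinarith

lemma key {V : Type*} [DecidableEq V] (G : SimpleGraph V) [DecidableRel G.Adj] :
    ∀ n (S : Finset V), S.card = n → S.Nonempty →
      ∃ T : Finset V, G.IsClique (T : Set V) ∧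
        (∑ y ∈ S, 1 / (Nhat G S y : ℝ)) ≤ T.card := by
  intro n
  induction n using Nat.strong_induction_on with
  | _ n ih =>
  intro S hcard hS
  by_cases hc : G.IsClique (S : Set V)
  · refine ⟨S, hc, ?_⟩
    have h1 : ∀ y ∈ S, Nhat G S y = 1 := by
      intro y hy
      have : S.filter (fun y' => y' = y ∨ ¬ G.Adj y' y) = {y} := by
        apply Finset.eq_singleton_iff_unique_mem.mpr
        constructor
        · simp [hy]
        · intro x hx
          simp only [Finset.mem_filter] at hx
          rcases hx.2 with h | h
          · exact h
          · by_contra hxy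
            exact h (hc hx.1 hy hxy)
      simp [Nhat, this]
    rw [Finset.sum_congr rfl (fun y hy => by rw [h1 y hy])]
    simp
  · -- not a clique: find non-adjacent pair
    rw [SimpleGraph.isClique_iff, Set.Pairwise] at hc
    push_neg at hc
    obtain ⟨u, hu, v, hv, huv, hadj⟩ := hc
    simp only [Finset.mem_coe] at hu hv
    -- vertex maximizing Nhat
    obtain ⟨b, hb, hbmax⟩ := S.exists_max_image (fun y => Nhat G S y) hS
    set m := Nhat G S b with hm
    have hmu2 : 2 ≤ Nhat G S u := by
      have hsub : ({u, v} : Finset V) ⊆ S.filter (fun y' => y' = u ∨ ¬ G.Adj y' u) := by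
        intro x hx
        simp only [Finset.mem_insert, Finset.mem_singleton] at hx
        rcases hx with rfl | rfl
        · simp [hu]
        · simp only [Finset.mem_filter]
          exact ⟨hv, Or.inr (fun h => hadj (h.symm))⟩
      have : ({u, v} : Finset V).card = 2 := Finset.card_pair huv
      calc 2 = ({u, v} : Finset V).card := this.symm
        _ ≤ _ := Finset.card_le_card hsub
  
    have hm2 : 2 ≤ m := le_trans hmu2 (hbmax u hu)
    set S' := S.erase b with hS'
    have hS'ne : S'.Nonempty := by
      by_cases hub : u = b
      · exact ⟨v, Finset.mem_erase.mpr ⟨fun h => huv (hub.trans h.symm), hv⟩⟩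
      · exact ⟨u, Finset.mem_erase.mpr ⟨hub, hu⟩⟩
    have hS'card : S'.card < n := by
      rw [← hcard]
      exact Finset.card_erase_lt_of_mem hb
    obtain ⟨T, hT, hTsum⟩ := ih S'.card hS'card S' rfl hS'ne
    refine ⟨T, hT, le_trans ?_ hTsum⟩
    -- the key sum inequality
    set A := (S.filter fun y' => y' = b ∨ ¬ G.Adj y' b).erase b with hA
    have hbfil : b ∈ S.filter (fun y' => y' = b ∨ ¬ G.Adj y' b) := by simp [hb]
    have hAcard : A.card = m - 1 := by
      rw [hA, Finset.card_erase_of_mem hbfil]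
      rfl
    have hAmem : ∀ y ∈ A, y ∈ S ∧ y ≠ b ∧ ¬ G.Adj y b := by
      intro y hy
      rw [hA, Finset.mem_erase, Finset.mem_filter] at hy
      refine ⟨hy.2.1, hy.1, ?_⟩
      rcases hy.2.2 with h | h
      · exact absurd h hy.1
      · exact h
    have hAsub : A ⊆ S' :=
      Finset.erase_subset_erase b (Finset.filter_subset _ _)
    -- vanishing off A
    have hvanish : ∀ y ∈ S', y ∉ A → Nhat G S' y = Nhat G S y := by
      intro y hy hyA
      have hyb : y ≠ b := (Finset.mem_erase.mp hy).1
      have hyS : y ∈ S := (Finset.mem_erase.mp hy).2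
      have hadjyb : G.Adj y b := by
        by_contra h
        exact hyA (by rw [hA]; exact Finset.mem_erase.mpr ⟨hyb,
          Finset.mem_filter.mpr ⟨hyS, Or.inr h⟩⟩)
      have hbnot : b ∉ S.filter (fun y' => y' = y ∨ ¬ G.Adj y' y) := by
        simp only [Finset.mem_filter, not_and, not_or, not_not]
        intro _
        exact ⟨hyb.symm, hadjyb.symm⟩
      unfold Nhat
      rw [hS', Finset.filter_erase, Finset.erase_eq_of_notMem hbnot]
    have hdrop : ∀ y ∈ A, Nhat G S' y = Nhat G S y - 1 := by
      intro y hy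
      obtain ⟨hyS, hyb, hnadj⟩ := hAmem y hy
      have hbmem : b ∈ S.filter (fun y' => y' = y ∨ ¬ G.Adj y' y) := by
        simp only [Finset.mem_filter]
        exact ⟨hb, Or.inr (fun h => hnadj h.symm)⟩
      unfold Nhat
      rw [hS', Finset.filter_erase, Finset.card_erase_of_mem hbmem]
    have hA2 : ∀ y ∈ A, 2 ≤ Nhat G S y := by
      intro y hy
      obtain ⟨hyS, hyb, hnadj⟩ := hAmem y hy
      have hsub : ({y, b} : Finset V) ⊆ S.filter (fun y' => y' = y ∨ ¬ G.Adj y' y) := by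
        intro x hx
        simp only [Finset.mem_insert, Finset.mem_singleton] at hx
        rcases hx with rfl | rfl
        · simp [hyS]
        · exact Finset.mem_filter.mpr ⟨hb, Or.inr (fun h => hnadj h.symm)⟩
      calc 2 = ({y, b} : Finset V).card := (Finset.card_pair hyb).symm
        _ ≤ _ := Finset.card_le_card hsub
    -- termwise bound on A
    have hterm : ∀ y ∈ A,
        1 / ((m:ℝ) * ((m:ℝ) - 1)) ≤ 1 / (Nhat G S' y : ℝ) - 1 / (Nhat G S y : ℝ) := by
      intro y hy
      have h2 := hA2 y hy
      have hle := hbmax y (hAmem y hy).1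
      have hcast : ((Nhat G S y - 1 : ℕ) : ℝ) = (Nhat G S y : ℝ) - 1 := by
        have : 1 ≤ Nhat G S y := le_trans (by norm_num) h2
        push_cast [this]
        ring
      rw [hdrop y hy, hcast]
      exact aux_frac _ _ h2 hle
    -- sum over A
    have hsumA : (A.card : ℝ) * (1 / ((m:ℝ) * ((m:ℝ) - 1))) ≤
        ∑ y ∈ A, (1 / (Nhat G S' y : ℝ) - 1 / (Nhat G S y : ℝ)) := by
      calc (A.card : ℝ) * (1 / ((m:ℝ) * ((m:ℝ) - 1)))
          = ∑ _y ∈ A, 1 / ((m:ℝ) * ((m:ℝ) - 1)) := by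
            rw [Finset.sum_const, nsmul_eq_mul]
        _ ≤ _ := Finset.sum_le_sum hterm
    have hAcardR : (A.card : ℝ) = (m : ℝ) - 1 := by
      rw [hAcard]
      have : 1 ≤ m := le_trans (by norm_num) hm2
      push_cast [this]
      ring
    have hmR : (2:ℝ) ≤ (m:ℝ) := by exact_mod_cast hm2
    have hval : (A.card : ℝ) * (1 / ((m:ℝ) * ((m:ℝ) - 1))) = 1 / (m:ℝ) := by
      rw [hAcardR]
      field_simp
      exact div_self (ne_of_gt (by linarith))
    -- sum over S' of differences equals sum over A
    have hext : ∑ y ∈ S', (1 / (Nhat G S' y : ℝ) - 1 / (Nhat G S y : ℝ)) =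
        ∑ y ∈ A, (1 / (Nhat G S' y : ℝ) - 1 / (Nhat G S y : ℝ)) := by
      apply (Finset.sum_subset hAsub ?_).symm
      intro y hy hyA
      rw [hvanish y hy hyA]
      ring
    have hgain : 1 / (m:ℝ) ≤
        ∑ y ∈ S', 1 / (Nhat G S' y : ℝ) - ∑ y ∈ S', 1 / (Nhat G S y : ℝ) := by
      rw [← Finset.sum_sub_distrib, hext, ← hval]
      exact hsumA
    have hsplit : ∑ y ∈ S, 1 / (Nhat G S y : ℝ) =
        1 / (m:ℝ) + ∑ y ∈ S', 1 / (Nhat G S y : ℝ) := by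
      rw [hS', ← Finset.add_sum_erase S _ hb]
    rw [hsplit]
    linarith

theorem stmt_6 {V : Type*} [Fintype V] [DecidableEq V] (G : SimpleGraph V)
    [DecidableRel G.Adj] (k : ℕ) (hk : 1 ≤ k) (S : Finset V) (hS : S.Nonempty)
    (hg : (k : ℝ) / (Fintype.card V : ℝ) ≤ g G S) :
    ∃ T : Finset V, G.IsClique (T : Set V) ∧ k ≤ T.card := by
  obtain ⟨T, hT, hTsum⟩ := key G S.card S rfl hS
  refine ⟨T, hT, ?_⟩
  have hV : (0:ℝ) < Fintype.card V := by
    have : 0 < Fintype.card V := Fintype.card_pos_iff.mpr ⟨hS.choose⟩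
    exact_mod_cast this
  have hkS : (k:ℝ) ≤ ∑ y ∈ S, 1 / (Nhat G S y : ℝ) := by
    rw [g] at hg
    rw [div_le_iff₀ hV] at hg
    calc (k:ℝ) ≤ 1 / (Fintype.card V : ℝ) * (∑ y ∈ S, 1 / (Nhat G S y : ℝ)) * Fintype.card V := hg
      _ = ∑ y ∈ S, 1 / (Nhat G S y : ℝ) := by field_simp
  exact_mod_cast le_trans hkS hTsum
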